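/- Let n, m ≥ 1 be integers and let (x,y) be drawn from D_hard(n,m). Then E[𝗂^{|x|+2|y|}] = 1/2 + (1/2)^{n+1}, where 𝗂 is the imaginary unit, the expectation is taken in the complex numbers, and |x|, |y| denote Hamming weights. -/

import Mathlib

open Finset

def tow : ℕ → ℕ
  | 0 => 1
  | x + 1 => 2 ^ tow x

def hw {ι : Type*} [Fintype ι] (x : ι → Bool) : ℕ :=
  (Finset.univ.filter fun i => x i = true).card

def IsLocal {κ ι : Type*} (d : ℕ) (f : (κ → Bool) → ι → Bool) : Prop :=
  ∀ i : ι, ∃ T : Finset κ, T.card ≤ d ∧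
    ∀ x y : κ → Bool, (∀ j ∈ T, x j = y j) → f x i = f y i

def IsProductDist {κ : Type*} [Fintype κ] (p : (κ → Bool) → ℝ) : Prop :=
  ∃ γ : κ → ℝ, (∀ j, 0 ≤ γ j ∧ γ j ≤ 1) ∧
    ∀ x, p x = ∏ j, if x j then γ j else 1 - γ j

def IsDist {α : Type*} [Fintype α] (p : α → ℝ) : Prop :=
  (∀ a, 0 ≤ p a) ∧ ∑ a, p a = 1

noncomputable def push {α β : Type*} [Fintype α] [DecidableEq β] (f : α → β) (p : α → ℝ) :
    β → ℝ :=
  fun b => ∑ a, if f a = b then p a else 0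

noncomputable def tv {α : Type*} [Fintype α] (p q : α → ℝ) : ℝ :=
  (1 / 2) * ∑ a, |p a - q a|

noncomputable def biased {ι : Type*} [Fintype ι] (γ : ℝ) (x : ι → Bool) : ℝ :=
  ∏ i, if x i then γ else 1 - γ

noncomputable def unifParity (ι : Type*) [Fintype ι] [DecidableEq ι] (b : ℕ)
    (y : ι → Bool) : ℝ :=
  if hw y % 2 = b then
    (1 : ℝ) / ((Finset.univ.filter fun z : ι → Bool => hw z % 2 = b).card : ℝ)
  else 0

noncomputable def dHard (n m : ℕ) (p : (Fin n → Bool) × (Fin m → Bool)) : ℝ :=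
  biased (1 / 4) p.1 *
    (if hw p.1 % 2 = 1 then (1 / 2 : ℝ) ^ m
     else unifParity (Fin m) ((hw p.1 / 2) % 2) p.2)

def splitFun (n m : ℕ) (z : Fin (n + m) → Bool) : (Fin n → Bool) × (Fin m → Bool) :=
  (fun i => z (Fin.castAdd m i), fun j => z (Fin.natAdd n j))

noncomputable def dHard' (n m : ℕ) (z : Fin (n + m) → Bool) : ℝ :=
  dHard n m (splitFun n m z)

def wOf {V : Type*} (Z : V → Bool) : Sym2 V → Bool :=
  Sym2.lift ⟨fun u v => xor (Z u) (Z v), fun u v => Bool.xor_comm _ _⟩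

def ip {V : Type*} [Fintype V] (Z X : V → Bool) : ℕ :=
  (Finset.univ.filter fun v => Z v = true ∧ X v = true).card

noncomputable def dHost {V : Type*} [Fintype V] [DecidableEq V] (G : SimpleGraph V)
    [DecidableRel G.Adj] (z : (V ⊕ V ⊕ G.edgeSet) → Bool) : ℝ :=
  let X : V → Bool := fun v => z (Sum.inl v)
  let Y : V → Bool := fun v => z (Sum.inr (Sum.inl v))
  let W : G.edgeSet → Bool := fun e => z (Sum.inr (Sum.inr e))
  biased (1 / 4) X *
    ∑ Z : V → Bool,
      (1 / 2 : ℝ) ^ (Fintype.card V) *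
        (if ∀ e : G.edgeSet, W e = wOf Z e.1 then 1 else 0) *
        (if hw X % 2 = 1 then (1 / 2 : ℝ) ^ (Fintype.card V)
         else unifParity V ((ip Z X + hw X / 2) % 2) Y)

section Aux

lemma sum_prod_bool {ι : Type*} [Fintype ι] [DecidableEq ι] (f : ι → Bool → ℂ) :
    ∑ x : ι → Bool, ∏ i, f i (x i) = ∏ i, (f i false + f i true) := by
  have := Finset.prod_univ_sum (t := fun _ : ι => (Finset.univ : Finset Bool)) (f := f)
  rw [Fintype.piFinset_univ] at this
  rw [← this]
  congr 1; ext i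
  simp [Fintype.sum_bool, add_comm]

lemma neg_one_pow_hw {ι : Type*} [Fintype ι] [DecidableEq ι] (x : ι → Bool) :
    ((-1 : ℂ)) ^ hw x = ∏ i, (if x i then (-1 : ℂ) else 1) := by
  rw [hw, Finset.prod_ite, Finset.prod_const, Finset.prod_const_one, mul_one]

lemma neg_one_pow_mod (k : ℕ) : ((-1 : ℂ)) ^ k = (-1) ^ (k % 2) := by
  conv_lhs => rw [← Nat.div_add_mod k 2]
  rw [pow_add, pow_mul]
  simp

lemma sum_neg_one_hw {m : ℕ} (hm : 1 ≤ m) :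
    ∑ y : Fin m → Bool, ((-1 : ℂ)) ^ hw y = 0 := by
  have : ∀ y : Fin m → Bool, ((-1 : ℂ)) ^ hw y = ∏ i, (if y i then (-1 : ℂ) else 1) :=
    fun y => neg_one_pow_hw y
  rw [Finset.sum_congr rfl (fun y _ => this y),
    sum_prod_bool (fun i b => if b = true then (-1 : ℂ) else 1)]
  rw [Finset.prod_eq_zero (Finset.mem_univ (⟨0, hm⟩ : Fin m))]
  norm_num

lemma unifParity_nonempty {m : ℕ} (hm : 1 ≤ m) (b : ℕ) (hb : b < 2) :
    ((Finset.univ.filter fun z : Fin m → Bool => hw z % 2 = b)).Nonempty := by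
  interval_cases b
  · exact ⟨fun _ => false, Finset.mem_filter.mpr ⟨Finset.mem_univ _, by simp [hw]⟩⟩
  · refine ⟨fun j => decide (j = ⟨0, hm⟩), ?_⟩
    refine Finset.mem_filter.mpr ⟨Finset.mem_univ _, ?_⟩; rw [hw]
    have : (Finset.univ.filter fun i : Fin m => decide (i = ⟨0, hm⟩) = true) = {⟨0, hm⟩} := by
      ext i; simp
    rw [this]; simp

lemma sum_unifParity {m : ℕ} (hm : 1 ≤ m) (b : ℕ) (hb : b < 2) :
    ∑ y : Fin m → Bool, unifParity (Fin m) b y = 1 := by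
  have hne := unifParity_nonempty hm b hb
  have hcard : (0 : ℝ) < ((Finset.univ.filter fun z : Fin m → Bool => hw z % 2 = b).card : ℝ) := by
    exact_mod_cast Finset.card_pos.mpr hne
  simp only [unifParity]
  rw [Finset.sum_ite, Finset.sum_const, Finset.sum_const_zero, add_zero, nsmul_eq_mul]
  field_simp

lemma biased_cast {n : ℕ} (x : Fin n → Bool) :
    ((biased (1 / 4) x : ℝ) : ℂ) = ∏ i, (if x i then (1 / 4 : ℂ) else 3 / 4) := by
  rw [biased]
  push_cast
  congr 1; ext i
  split_ifs <;> norm_num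

lemma sum_biased {n : ℕ} : ∑ x : Fin n → Bool, ((biased (1 / 4) x : ℝ) : ℂ) = 1 := by
  have : ∀ x : Fin n → Bool, ((biased (1 / 4) x : ℝ) : ℂ)
      = ∏ i, (if x i then (1 / 4 : ℂ) else 3 / 4) := biased_cast
  rw [Finset.sum_congr rfl (fun x _ => this x),
    sum_prod_bool (fun i b => if b = true then (1 / 4 : ℂ) else 3 / 4)]
  norm_num

lemma sum_biased_sign {n : ℕ} :
    ∑ x : Fin n → Bool, ((biased (1 / 4) x : ℝ) : ℂ) * (-1) ^ hw x = (1 / 2 : ℂ) ^ n := by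
  have : ∀ x : Fin n → Bool, ((biased (1 / 4) x : ℝ) : ℂ) * (-1) ^ hw x
      = ∏ i, (if x i then (-(1 / 4) : ℂ) else 3 / 4) := by
    intro x
    rw [biased_cast, neg_one_pow_hw, ← Finset.prod_mul_distrib]
    congr 1; ext i
    cases hx : x i <;> norm_num
  rw [Finset.sum_congr rfl (fun x _ => this x),
    sum_prod_bool (fun i b => if b = true then (-(1 / 4) : ℂ) else 3 / 4)]
  norm_num
  rw [one_div_pow, one_div]

end Aux

theorem stmt8 (n m : ℕ) (hn : 1 ≤ n) (hm : 1 ≤ m) :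
    ∑ p : (Fin n → Bool) × (Fin m → Bool),
        (dHard n m p : ℂ) * Complex.I ^ (hw p.1 + 2 * hw p.2) =
      1 / 2 + (1 / 2 : ℂ) ^ (n + 1) := by
  rw [Fintype.sum_prod_type]
  have key : ∀ x : Fin n → Bool,
      ∑ y : Fin m → Bool, (dHard n m (x, y) : ℂ) * Complex.I ^ (hw x + 2 * hw y)
        = if hw x % 2 = 0 then ((biased (1 / 4) x : ℝ) : ℂ) else 0 := by
    intro x
    rcases Nat.mod_two_eq_zero_or_one (hw x) with hx | hx
    · -- even case
      rw [if_pos hx]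
      have hb : (hw x / 2) % 2 < 2 := Nat.mod_lt _ two_pos
      have hterm : ∀ y : Fin m → Bool,
          (dHard n m (x, y) : ℂ) * Complex.I ^ (hw x + 2 * hw y)
            = ((biased (1 / 4) x : ℝ) : ℂ) * Complex.I ^ hw x * (-1) ^ ((hw x / 2) % 2) *
                ((unifParity (Fin m) ((hw x / 2) % 2) y : ℝ) : ℂ) := by
        intro y
        have hne : ¬ (hw x % 2 = 1) := by omega
        simp only [dHard, hne, if_false]
        push_cast
        rw [pow_add, pow_mul, Complex.I_sq]
        by_cases hy : hw y % 2 = (hw x / 2) % 2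
        · have h1 : ((-1 : ℂ)) ^ hw y = (-1) ^ ((hw x / 2) % 2) := by
            rw [neg_one_pow_mod, hy]
          rw [h1]; ring
        · simp only [unifParity, hy, if_false]
          push_cast
          ring
      rw [Finset.sum_congr rfl (fun y _ => hterm y), ← Finset.mul_sum]
      have hsum : ∑ y : Fin m → Bool, ((unifParity (Fin m) ((hw x / 2) % 2) y : ℝ) : ℂ) = 1 := by
        rw [← Complex.ofReal_sum, sum_unifParity hm _ hb, Complex.ofReal_one]
      rw [hsum, mul_one]
      obtain ⟨k, hk⟩ : 2 ∣ hw x := Nat.dvd_of_mod_eq_zero hx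
      rw [hk]
      have h2 : Complex.I ^ (2 * k) = (-1) ^ k := by
        rw [pow_mul, Complex.I_sq]
      have h3 : (2 * k) / 2 = k := by omega
      rw [h2, h3]
      have h4 : ((-1 : ℂ)) ^ k * (-1) ^ (k % 2) = 1 := by
        rw [← pow_add]
        refine Even.neg_one_pow ?_
        rcases Nat.even_or_odd k with he | ho
        · have : k % 2 = 0 := Nat.even_iff.mp he
          rw [this]; simpa using he
        · have : k % 2 = 1 := Nat.odd_iff.mp ho
          rw [this]
          exact ho.add_one
      rw [mul_assoc, h4, mul_one]
    · -- odd case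
      rw [if_neg (by omega)]
      have hterm : ∀ y : Fin m → Bool,
          (dHard n m (x, y) : ℂ) * Complex.I ^ (hw x + 2 * hw y)
            = ((biased (1 / 4) x : ℝ) : ℂ) * ((1 / 2 : ℝ) ^ m : ℝ) * Complex.I ^ hw x *
                (-1) ^ hw y := by
        intro y
        simp only [dHard, hx, if_true]
        push_cast
        rw [pow_add, pow_mul, Complex.I_sq]
        ring
      rw [Finset.sum_congr rfl (fun y _ => hterm y), ← Finset.mul_sum, sum_neg_one_hw hm,
        mul_zero]
  rw [Finset.sum_congr rfl (fun x _ => key x)]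
  have hsplit : ∀ x : Fin n → Bool,
      (if hw x % 2 = 0 then ((biased (1 / 4) x : ℝ) : ℂ) else 0)
        = (((biased (1 / 4) x : ℝ) : ℂ) + ((biased (1 / 4) x : ℝ) : ℂ) * (-1) ^ hw x) / 2 := by
    intro x
    rcases Nat.mod_two_eq_zero_or_one (hw x) with hx | hx
    · rw [if_pos hx, neg_one_pow_mod, hx]
      ring
    · rw [if_neg (by omega), neg_one_pow_mod, hx]
      ring
  rw [Finset.sum_congr rfl (fun x _ => hsplit x)]
  rw [← Finset.sum_div, Finset.sum_add_distrib, sum_biased, sum_biased_sign]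
  rw [pow_succ]
  ring
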